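/- Let X, Y, Z be twice continuously differentiable functions on open intervals I, J, K ⊆ ℝ, H ∈ ℝ, and suppose X(u)+Y(v)+Z(w) > 0 and (X(u)+Y(v))Z'(w) + (X'(u)+Y'(v))Z(w) + X'(u)Y(v) + X(u)Y'(v) = −4H(X(u)+Y(v)+Z(w))^{3/2} hold for all u ∈ I, v ∈ J, w ∈ K with u+v+w = 0, and that X(u)+Y(v) ≠ 0 on this set. Define P(u,v) = X'(u)² − Y'(v)² − (X(u)+Y(v))(X''(u)−Y''(v)) and Q(u,v) = (X'(u)−Y'(v))(X'(u)Y(v)+X(u)Y'(v)) − (X(u)+Y(v))(X''(u)Y(v)−X(u)Y''(v)). Then for all u ∈ I, v ∈ J, w ∈ K with u+v+w = 0: P(u,v)·Z(w) + Q(u,v) = 2H(X'(u)−Y'(v))(X(u)+Y(v)−2Z(w))·(X(u)+Y(v)+Z(w))^{1/2}. -/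

import Mathlib

open Set

lemma hd1 {a b : ℝ} {f : ℝ → ℝ} (hf : ContDiffOn ℝ 2 f (Set.Ioo a b)) {x : ℝ}
    (hx : x ∈ Set.Ioo a b) : HasDerivAt f (deriv f x) x :=
  ((hf.contDiffAt (isOpen_Ioo.mem_nhds hx)).differentiableAt (by norm_num)).hasDerivAt

lemma hd2 {a b : ℝ} {f : ℝ → ℝ} (hf : ContDiffOn ℝ 2 f (Set.Ioo a b)) {x : ℝ}
    (hx : x ∈ Set.Ioo a b) : HasDerivAt (deriv f) (deriv (deriv f) x) x := by
  have h1 : ContDiffOn ℝ 1 (deriv f) (Set.Ioo a b) :=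
    hf.deriv_of_isOpen isOpen_Ioo (by norm_num)
  exact ((h1.contDiffAt (isOpen_Ioo.mem_nhds hx)).differentiableAt (by norm_num)).hasDerivAt

lemma aux_diff {aI bI aK bK H A A' c : ℝ} {X Z : ℝ → ℝ}
    (hX : ContDiffOn ℝ 2 X (Set.Ioo aI bI)) (hZ : ContDiffOn ℝ 2 Z (Set.Ioo aK bK))
    {u0 : ℝ} (hu0 : u0 ∈ Set.Ioo aI bI) (hw0 : -u0 - c ∈ Set.Ioo aK bK)
    (heq : ∀ u ∈ Set.Ioo aI bI, -u - c ∈ Set.Ioo aK bK →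
      (X u + A) * deriv Z (-u - c) + (deriv X u + A') * Z (-u - c)
        + deriv X u * A + X u * A'
      = -4 * H * (X u + A + Z (-u - c)) ^ ((3 : ℝ) / 2)) :
    deriv X u0 * deriv Z (-u0 - c) - (X u0 + A) * deriv (deriv Z) (-u0 - c)
      + deriv (deriv X) u0 * Z (-u0 - c) - (deriv X u0 + A') * deriv Z (-u0 - c)
      + deriv (deriv X) u0 * A + deriv X u0 * A'
    = -6 * H * (X u0 + A + Z (-u0 - c)) ^ ((1 : ℝ) / 2)
        * (deriv X u0 - deriv Z (-u0 - c)) := by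
  set w0 := -u0 - c with hw0def
  have hXd1 : HasDerivAt X (deriv X u0) u0 := hd1 hX hu0
  have hXd2 : HasDerivAt (deriv X) (deriv (deriv X) u0) u0 := hd2 hX hu0
  have hZd1 : HasDerivAt Z (deriv Z w0) w0 := hd1 hZ hw0
  have hZd2 : HasDerivAt (deriv Z) (deriv (deriv Z) w0) w0 := hd2 hZ hw0
  have hw : HasDerivAt (fun u : ℝ => -u - c) (-1) u0 := by
    simpa using ((hasDerivAt_id u0).neg).sub_const c
  have hZc : HasDerivAt (fun u => Z (-u - c)) (deriv Z w0 * -1) u0 := hZd1.comp u0 hw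
  have hZc' : HasDerivAt (fun u => deriv Z (-u - c)) (deriv (deriv Z) w0 * -1) u0 :=
    by have h := hZd2.comp u0 hw; exact h
  -- LHS
  have hL : HasDerivAt (fun u => (X u + A) * deriv Z (-u - c) + (deriv X u + A') * Z (-u - c)
      + deriv X u * A + X u * A')
      ((deriv X u0) * deriv Z w0 + (X u0 + A) * (deriv (deriv Z) w0 * -1)
        + ((deriv (deriv X) u0) * Z w0 + (deriv X u0 + A') * (deriv Z w0 * -1))
        + deriv (deriv X) u0 * A + deriv X u0 * A') u0 := by
    exact ((((hXd1.add_const A).mul hZc').add ((hXd2.add_const A').mul hZc)).add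
      (hXd2.mul_const A)).add (hXd1.mul_const A')
  -- RHS
  have hS : HasDerivAt (fun u => X u + A + Z (-u - c)) (deriv X u0 + deriv Z w0 * -1) u0 :=
    (hXd1.add_const A).add hZc
  have hrpow : HasDerivAt (fun x : ℝ => x ^ ((3 : ℝ) / 2))
      ((3 : ℝ) / 2 * (X u0 + A + Z w0) ^ ((3 : ℝ) / 2 - 1)) (X u0 + A + Z w0) :=
    Real.hasDerivAt_rpow_const (Or.inr (by norm_num))
  have hR : HasDerivAt (fun u => -4 * H * (X u + A + Z (-u - c)) ^ ((3 : ℝ) / 2))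
      (-4 * H * ((3 : ℝ) / 2 * (X u0 + A + Z w0) ^ ((3 : ℝ) / 2 - 1)
        * (deriv X u0 + deriv Z w0 * -1))) u0 :=
    ((hrpow.comp u0 hS)).const_mul (-4 * H)
  -- eventual equality
  have hev : (fun u => (X u + A) * deriv Z (-u - c) + (deriv X u + A') * Z (-u - c)
      + deriv X u * A + X u * A')
      =ᶠ[nhds u0] (fun u => -4 * H * (X u + A + Z (-u - c)) ^ ((3 : ℝ) / 2)) := by
    have h1 : ∀ᶠ u in nhds u0, u ∈ Set.Ioo aI bI := isOpen_Ioo.mem_nhds hu0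
    have h2 : ∀ᶠ u in nhds u0, -u - c ∈ Set.Ioo aK bK := by
      have : ContinuousAt (fun u : ℝ => -u - c) u0 := by fun_prop
      exact this (isOpen_Ioo.mem_nhds hw0)
    filter_upwards [h1, h2] with u hu hwu using heq u hu hwu
  have huniq := hL.unique (hR.congr_of_eventuallyEq hev)
  rw [show (3 : ℝ) / 2 - 1 = 1 / 2 by norm_num] at huniq
  linarith [huniq]


/-- Eliminating `Z'` between the transformed CMC equation and its derivative along the
constraint `u + v + w = 0` gives `PZ + Q = 2H(X'−Y')(X+Y−2Z)(X+Y+Z)^{1/2}`. -/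
theorem stmt_10 (aI bI aJ bJ aK bK H : ℝ) (X Y Z : ℝ → ℝ) (P Q : ℝ → ℝ → ℝ)
    (hX : ContDiffOn ℝ 2 X (Set.Ioo aI bI))
    (hY : ContDiffOn ℝ 2 Y (Set.Ioo aJ bJ))
    (hZ : ContDiffOn ℝ 2 Z (Set.Ioo aK bK))
    (hpos : ∀ u ∈ Set.Ioo aI bI, ∀ v ∈ Set.Ioo aJ bJ, ∀ w ∈ Set.Ioo aK bK,
      u + v + w = 0 → X u + Y v + Z w > 0)
    (heq : ∀ u ∈ Set.Ioo aI bI, ∀ v ∈ Set.Ioo aJ bJ, ∀ w ∈ Set.Ioo aK bK,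
      u + v + w = 0 →
      (X u + Y v) * deriv Z w + (deriv X u + deriv Y v) * Z w
          + deriv X u * Y v + X u * deriv Y v
        = -4 * H * (X u + Y v + Z w) ^ ((3 : ℝ) / 2))
    (hne : ∀ u ∈ Set.Ioo aI bI, ∀ v ∈ Set.Ioo aJ bJ, ∀ w ∈ Set.Ioo aK bK,
      u + v + w = 0 → X u + Y v ≠ 0)
    (hP : ∀ u ∈ Set.Ioo aI bI, ∀ v ∈ Set.Ioo aJ bJ,
      P u v = (deriv X u) ^ 2 - (deriv Y v) ^ 2
        - (X u + Y v) * (deriv (deriv X) u - deriv (deriv Y) v))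
    (hQ : ∀ u ∈ Set.Ioo aI bI, ∀ v ∈ Set.Ioo aJ bJ,
      Q u v = (deriv X u - deriv Y v) * (deriv X u * Y v + X u * deriv Y v)
        - (X u + Y v) * (deriv (deriv X) u * Y v - X u * deriv (deriv Y) v)) :
    ∀ u ∈ Set.Ioo aI bI, ∀ v ∈ Set.Ioo aJ bJ, ∀ w ∈ Set.Ioo aK bK,
      u + v + w = 0 →
      P u v * Z w + Q u v
        = 2 * H * (deriv X u - deriv Y v) * (X u + Y v - 2 * Z w)
          * (X u + Y v + Z w) ^ ((1 : ℝ) / 2) := by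
  intro u hu v hv w hw huvw
  have hw' : w = -u - v := by linarith
  subst hw'
  -- derivative in u-direction (v fixed)
  have hA := aux_diff (H := H) (A := Y v) (A' := deriv Y v) (c := v) hX hZ hu hw
    (by
      intro u' hu' hwu'
      have := heq u' hu' v hv (-u' - v) hwu' (by ring)
      linear_combination this)
  -- derivative in v-direction (u fixed)
  have hB := aux_diff (H := H) (A := X u) (A' := deriv X u) (c := u) hY hZ hv
    (by rw [show -v - u = -u - v by ring]; exact hw)
    (by
      intro v' hv' hwv'
      have h0 := heq u hu v' hv' (-v' - u) hwv' (by ring)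
      rw [show X u + Y v' + Z (-v' - u) = Y v' + X u + Z (-v' - u) by ring] at h0
      linear_combination h0)
  rw [show -v - u = -u - v by ring] at hB
  have hE := heq u hu v hv (-u - v) hw (by ring)
  have hSpos : (0 : ℝ) < X u + Y v + Z (-u - v) := hpos u hu v hv (-u - v) hw (by ring)
  have h32 : (X u + Y v + Z (-u - v)) ^ ((3 : ℝ) / 2)
      = (X u + Y v + Z (-u - v)) * (X u + Y v + Z (-u - v)) ^ ((1 : ℝ) / 2) := by
    rw [show (3 : ℝ) / 2 = 1 + 1 / 2 by norm_num, Real.rpow_add hSpos, Real.rpow_one]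
  rw [h32] at hE
  rw [show Y v + X u + Z (-u - v) = X u + Y v + Z (-u - v) by ring] at hB
  rw [hP u hu v hv, hQ u hu v hv]
  linear_combination (-(X u + Y v)) * hA + (X u + Y v) * hB + (deriv X u - deriv Y v) * hE
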